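/- arXiv:2308.16038 — 2 statements merged into one kernel-verified Lean document; each statement's English description precedes it below -/
import Mathlib

section
/- Let f, g : {0,1}^n → ℝ with f ≥ 0 pointwise, and let τ > ρ be reals such that (g ∗ f)(x) ≥ τ f(x) for all x, and ĝ(S) ≤ ρ whenever |S| ≥ d. Then Λ := g ∗ f ∗ f − ρ·(f ∗ f) satisfies Λ ≥ 0 pointwise and Λ̂(S) ≤ 0 for all |S| ≥ d. -/
open Finset

namespace Cube

attribute [local instance] Classical.propDecidable

/-- Hamming weight of a point of the Boolean cube. -/
def wt {n : ℕ} (x : Fin n → Bool) : ℕ := (univ.filter fun i => x i = true).card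

/-- Hamming distance. -/
def hdist {n : ℕ} (x y : Fin n → Bool) : ℕ := (univ.filter fun i => x i ≠ y i).card

/-- Coordinatewise addition mod 2 (XOR). -/
def xadd {n : ℕ} (x y : Fin n → Bool) : Fin n → Bool := fun i => x i != y i

/-- Walsh character `W_S(x) = (-1)^{⟨S,x⟩}`. -/
noncomputable def W {n : ℕ} (S x : Fin n → Bool) : ℝ :=
  (-1 : ℝ) ^ (univ.filter fun i => S i = true ∧ x i = true).card

/-- Fourier transform `f̂(S) = 2^{-n} ∑_x f(x) W_S(x)`. -/
noncomputable def ft {n : ℕ} (f : (Fin n → Bool) → ℝ) : (Fin n → Bool) → ℝ :=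
  fun S => (∑ x, f x * W S x) / 2 ^ n

/-- Convolution `(f ∗ g)(x) = 2^{-n} ∑_y f(y) g(x+y)`. -/
noncomputable def conv {n : ℕ} (f g : (Fin n → Bool) → ℝ) : (Fin n → Bool) → ℝ :=
  fun x => (∑ y, f y * g (xadd x y)) / 2 ^ n

/-- Normalized inner product `⟨f,g⟩ = 2^{-n} ∑_x f(x) g(x)`. -/
noncomputable def inp {n : ℕ} (f g : (Fin n → Bool) → ℝ) : ℝ := (∑ x, f x * g x) / 2 ^ n

/-- The all-zeros vector. -/
def zeroV (n : ℕ) : Fin n → Bool := fun _ => false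

/-- Krawtchouk polynomial value `K_s(j)` (parameter `n`), at integer points. -/
noncomputable def kraw (n s j : ℕ) : ℝ :=
  ∑ k ∈ Finset.range (s + 1),
    (-1 : ℝ) ^ k * (j.choose k : ℝ) * ((n - j).choose (s - k) : ℝ)

/-- Generalized binomial coefficient `C(x,k)` for real `x`. -/
noncomputable def rchoose (x : ℝ) (k : ℕ) : ℝ :=
  (∏ i ∈ Finset.range k, (x - i)) / (k.factorial : ℝ)

/-- Krawtchouk polynomial `K_m` (parameter `n`) as a function of a real variable. -/
noncomputable def krawR (n m : ℕ) (x : ℝ) : ℝ :=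
  ∑ k ∈ Finset.range (m + 1),
    (-1 : ℝ) ^ k * rchoose x k * rchoose ((n : ℝ) - x) (m - k)

/-- Symmetrization operator: average over the Hamming sphere of the same weight. -/
noncomputable def symm {n : ℕ} (f : (Fin n → Bool) → ℝ) : (Fin n → Bool) → ℝ :=
  fun x => (∑ y ∈ univ.filter (fun y => wt y = wt x), f y) /
    ((univ.filter (fun y : Fin n → Bool => wt y = wt x)).card : ℝ)

/-- Binary entropy function. -/
noncomputable def binH (x : ℝ) : ℝ :=
  x * Real.logb 2 (1 / x) + (1 - x) * Real.logb 2 (1 / (1 - x))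


open scoped symmDiff

lemma xadd_invol {n : ℕ} (y : Fin n → Bool) : Function.Involutive (xadd y) := by
  intro z
  funext i
  simp only [xadd]
  cases y i <;> cases z i <;> rfl

lemma xadd_cancel {n : ℕ} (y z : Fin n → Bool) : xadd (xadd y z) y = z := by
  funext i
  simp only [xadd]
  cases y i <;> cases z i <;> rfl

lemma W_xadd {n : ℕ} (S x y : Fin n → Bool) : W S (xadd x y) = W S x * W S y := by
  classical
  unfold W
  set A := univ.filter fun i => S i = true ∧ x i = true with hA
  set B := univ.filter fun i => S i = true ∧ y i = true with hB
  have hset : (univ.filter fun i => S i = true ∧ xadd x y i = true) = A ∆ B := by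
    ext i
    simp only [hA, hB, Finset.mem_symmDiff, mem_filter, mem_univ, true_and, xadd]
    cases h1 : S i <;> cases h2 : x i <;> cases h3 : y i <;> simp [h1, h2, h3]
  rw [hset]
  have hcard : (A ∆ B).card + 2 * (A ∩ B).card = A.card + B.card := by
    have hd : (A ∆ B).card = (A \ B).card + (B \ A).card := by
      rw [symmDiff_def, Finset.sup_eq_union]
      exact Finset.card_union_of_disjoint disjoint_sdiff_sdiff
    have e1 : (A \ B).card + (A ∩ B).card = A.card := Finset.card_sdiff_add_card_inter A B
    have e2 : (B \ A).card + (B ∩ A).card = B.card := Finset.card_sdiff_add_card_inter B A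
    rw [Finset.inter_comm B A] at e2
    omega
  have h : ((-1 : ℝ)) ^ ((A ∆ B).card + 2 * (A ∩ B).card) = (-1 : ℝ) ^ (A.card + B.card) := by
    rw [hcard]
  rw [pow_add, pow_mul] at h
  rw [← pow_add]
  simpa using h

lemma ft_conv {n : ℕ} (f g : (Fin n → Bool) → ℝ) (S : Fin n → Bool) :
    ft (conv f g) S = ft f S * ft g S := by
  classical
  unfold ft conv
  have key : ∑ x, (∑ y, f y * g (xadd x y)) * W S x
      = (∑ x, f x * W S x) * (∑ x, g x * W S x) := by
    have step1 : ∑ x, (∑ y, f y * g (xadd x y)) * W S x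
        = ∑ y, ∑ x, f y * g (xadd x y) * W S x := by
      rw [Finset.sum_comm]
      exact Finset.sum_congr rfl fun x _ => Finset.sum_mul _ _ _
    rw [step1, Finset.sum_mul_sum]
    refine Finset.sum_congr rfl fun y _ => ?_
    rw [← Equiv.sum_comp (Function.Involutive.toPerm (xadd y) (xadd_invol y))
      (fun x => f y * g (xadd x y) * W S x)]
    refine Finset.sum_congr rfl fun z _ => ?_
    simp only [Function.Involutive.coe_toPerm]
    rw [xadd_cancel, W_xadd]
    ring
  have lhs_eq : (∑ x, (∑ y, f y * g (xadd x y)) / 2 ^ n * W S x)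
      = (∑ x, (∑ y, f y * g (xadd x y)) * W S x) / 2 ^ n := by
    rw [Finset.sum_div]
    exact Finset.sum_congr rfl fun x _ => (div_mul_eq_mul_div _ _ _)
  rw [lhs_eq, key]
  have h2n : (2 : ℝ) ^ n ≠ 0 := by positivity
  field_simp

theorem two_function_feasible (n d : ℕ) (f g : (Fin n → Bool) → ℝ) (τ ρ : ℝ)
    (hf : ∀ x, 0 ≤ f x) (hτρ : ρ < τ)
    (h1 : ∀ x, τ * f x ≤ conv g f x)
    (h2 : ∀ S : Fin n → Bool, d ≤ wt S → ft g S ≤ ρ) :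
    (∀ x, 0 ≤ conv (conv g f) f x - ρ * conv f f x) ∧
    (∀ S : Fin n → Bool, d ≤ wt S →
      ft (fun x => conv (conv g f) f x - ρ * conv f f x) S ≤ 0) := by
  have h2n : (0 : ℝ) < 2 ^ n := by positivity
  have hconvff : ∀ x, 0 ≤ conv f f x := by
    intro x
    unfold conv
    apply div_nonneg _ h2n.le
    exact Finset.sum_nonneg fun y _ => mul_nonneg (hf y) (hf _)
  have hkey : ∀ x, τ * conv f f x ≤ conv (conv g f) f x := by
    intro x
    have heq : τ * conv f f x = (∑ y, τ * f y * f (xadd x y)) / 2 ^ n := by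
      unfold conv
      rw [mul_div_assoc', Finset.mul_sum]
      congr 1
      exact Finset.sum_congr rfl fun y _ => by ring
    rw [heq]
    unfold conv
    have hsum : (∑ y, τ * f y * f (xadd x y)) ≤ ∑ y, conv g f y * f (xadd x y) :=
      Finset.sum_le_sum fun y _ => mul_le_mul_of_nonneg_right (h1 y) (hf _)
    gcongr with y hy
    · exact hf _
    · exact h1 y
  constructor
  · intro x
    have h3 : ρ * conv f f x ≤ τ * conv f f x :=
      mul_le_mul_of_nonneg_right hτρ.le (hconvff x)
    linarith [hkey x]
  · intro S hS
    have hlin : ft (fun x => conv (conv g f) f x - ρ * conv f f x) S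
        = ft (conv (conv g f) f) S - ρ * ft (conv f f) S := by
      unfold ft
      have : ∀ x : Fin n → Bool, (conv (conv g f) f x - ρ * conv f f x) * W S x
          = conv (conv g f) f x * W S x - ρ * (conv f f x * W S x) := fun x => by ring
      simp only [this]
      rw [Finset.sum_sub_distrib, ← Finset.mul_sum, sub_div, mul_div_assoc]
    rw [hlin, ft_conv, ft_conv, ft_conv]
    have := h2 S hS
    nlinarith [sq_nonneg (ft f S)]


end Cube
end

section
/- Let d < βn and let K_m be a Krawtchouk polynomial whose smallest root x₁ satisfies x₁ − 1 > βn. Then K_m(d) > 0 and K_m(d)/K_m(0) ≥ ((x₁ − d)/x₁)^m ≥ (2β − 2δ)^m, where δ = d/n. -/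
open Finset

namespace Cube

attribute [local instance] Classical.propDecidable

lemma charSum {n : ℕ} (U A : Finset (Fin n)) :
    ∑ y ∈ U.powerset, (-1:ℝ)^((A ∩ y).card) = if A ∩ U = ∅ then (2:ℝ)^U.card else 0 := by
  classical
  have h1 : ∀ y ∈ U.powerset, (-1:ℝ)^((A ∩ y).card) = ∏ i ∈ y, (if i ∈ A then (-1:ℝ) else 1) := by
    intro y _
    rw [Finset.prod_ite, Finset.prod_const, Finset.prod_const, one_pow, mul_one]
    have he : y.filter (fun i => i ∈ A) = A ∩ y := by
      ext i; simp [Finset.mem_inter, and_comm]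
    rw [he]
  rw [Finset.sum_congr rfl h1]
  have h2 : ∑ y ∈ U.powerset, ∏ i ∈ y, (if i ∈ A then (-1:ℝ) else 1)
      = ∏ i ∈ U, ((if i ∈ A then (-1:ℝ) else 1) + 1) := by
    rw [Finset.prod_add]
    apply Finset.sum_congr rfl
    intro t _
    simp
  rw [h2]
  by_cases h : A ∩ U = ∅
  · rw [if_pos h]
    have : ∀ i ∈ U, ((if i ∈ A then (-1:ℝ) else 1) + 1) = 2 := by
      intro i hi
      have : i ∉ A := by
        intro hiA
        exact (Finset.notMem_empty i) (h ▸ Finset.mem_inter.2 ⟨hiA, hi⟩)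
      simp [this]; norm_num
    rw [Finset.prod_congr rfl this, Finset.prod_const]
  · rw [if_neg h]
    obtain ⟨i, hi⟩ := Finset.nonempty_iff_ne_empty.2 h
    obtain ⟨hiA, hiU⟩ := Finset.mem_inter.1 hi
    exact Finset.prod_eq_zero hiU (by simp [hiA])
lemma sphereSum {n : ℕ} (m : ℕ) (x : Finset (Fin n)) :
    ∑ A ∈ (univ : Finset (Fin n)).powersetCard m, (-1:ℝ)^((A ∩ x).card) = kraw n m x.card := by
  classical
  have hmap : ∀ A ∈ (univ : Finset (Fin n)).powersetCard m, (A ∩ x).card ∈ Finset.range (m+1) := by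
    intro A hA
    rw [Finset.mem_powersetCard] at hA
    rw [Finset.mem_range, Nat.lt_succ_iff, ← hA.2]
    exact Finset.card_le_card (Finset.inter_subset_left)
  rw [← Finset.sum_fiberwise_of_maps_to hmap]
  unfold kraw
  apply Finset.sum_congr rfl
  intro k hk
  rw [Finset.mem_range, Nat.lt_succ_iff] at hk
  have hfib : ∀ A ∈ ((univ : Finset (Fin n)).powersetCard m).filter (fun A => (A ∩ x).card = k),
      (-1:ℝ)^((A ∩ x).card) = (-1:ℝ)^k := by
    intro A hA
    rw [Finset.mem_filter] at hA
    rw [hA.2]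
  rw [Finset.sum_congr rfl hfib, Finset.sum_const, nsmul_eq_mul]
  have hcard : (((univ : Finset (Fin n)).powersetCard m).filter (fun A => (A ∩ x).card = k)).card
      = (x.card.choose k) * ((n - x.card).choose (m - k)) := by
    have hcc : xᶜ.card = n - x.card := by rw [Finset.card_compl, Fintype.card_fin]
    rw [← hcc, ← Finset.card_powersetCard k x, ← Finset.card_powersetCard (m-k) xᶜ,
      ← Finset.card_product]
    · apply Finset.card_bij' (fun A _ => (A ∩ x, A \ x))
        (fun P _ => P.1 ∪ P.2)
      · intro A hA
        rw [Finset.mem_filter, Finset.mem_powersetCard] at hA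
        obtain ⟨⟨_, hAcard⟩, hAk⟩ := hA
        rw [Finset.mem_product, Finset.mem_powersetCard, Finset.mem_powersetCard]
        refine ⟨⟨Finset.inter_subset_right, hAk⟩, ⟨?_, ?_⟩⟩
        · intro i hi
          rw [Finset.mem_compl]
          exact (Finset.mem_sdiff.1 hi).2
        · show (A \ x).card = m - k
          have := Finset.card_inter_add_card_sdiff A x
          omega
      · intro P hP
        rw [Finset.mem_product, Finset.mem_powersetCard, Finset.mem_powersetCard] at hP
        obtain ⟨⟨hP1, hP1c⟩, ⟨hP2, hP2c⟩⟩ := hP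
        have hdisj : Disjoint P.1 P.2 := by
          apply Finset.disjoint_left.2
          intro i hi1 hi2
          exact (Finset.mem_compl.1 (hP2 hi2)) (hP1 hi1)
        rw [Finset.mem_filter, Finset.mem_powersetCard]
        have hP2x : P.2 ∩ x = ∅ := by
          apply Finset.eq_empty_of_forall_notMem
          intro i hi
          rw [Finset.mem_inter] at hi
          exact (Finset.mem_compl.1 (hP2 hi.1)) hi.2
        have hint : (P.1 ∪ P.2) ∩ x = P.1 := by
          rw [Finset.union_inter_distrib_right, hP2x, Finset.union_empty,
            Finset.inter_eq_left.2 hP1]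
        refine ⟨⟨Finset.subset_univ _, ?_⟩, by rw [hint, hP1c]⟩
        rw [Finset.card_union_of_disjoint hdisj, hP1c, hP2c]
        omega
      · intro A hA
        rw [Finset.mem_filter, Finset.mem_powersetCard] at hA
        simp only
        rw [Finset.union_comm, Finset.sdiff_union_inter]
      · intro P hP
        rw [Finset.mem_product, Finset.mem_powersetCard, Finset.mem_powersetCard] at hP
        obtain ⟨⟨hP1, hP1c⟩, ⟨hP2, hP2c⟩⟩ := hP
        have hP2x : P.2 ∩ x = ∅ := by
          apply Finset.eq_empty_of_forall_notMem
          intro i hi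
          rw [Finset.mem_inter] at hi
          exact (Finset.mem_compl.1 (hP2 hi.1)) hi.2
        have hint : (P.1 ∪ P.2) ∩ x = P.1 := by
          rw [Finset.union_inter_distrib_right, hP2x, Finset.union_empty,
            Finset.inter_eq_left.2 hP1]
        have hsd : (P.1 ∪ P.2) \ x = P.2 := by
          ext i
          simp only [Finset.mem_sdiff, Finset.mem_union]
          constructor
          · rintro ⟨h1 | h2, hnx⟩
            · exact absurd (hP1 h1) hnx
            · exact h2
          · intro h2
            exact ⟨Or.inr h2, fun hx => (Finset.mem_compl.1 (hP2 h2)) hx⟩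
        exact Prod.ext hint hsd
  rw [hcard]
  push_cast
  ring

lemma orthBinom {n : ℕ} (m t : ℕ) (ht : t < m) :
    ∑ x ∈ (univ : Finset (Fin n)).powerset, (x.card.choose t : ℝ) * kraw n m x.card = 0 := by
  classical
  have stepA : ∀ x ∈ (univ : Finset (Fin n)).powerset,
      (x.card.choose t : ℝ) * kraw n m x.card
      = ∑ T ∈ (univ : Finset (Fin n)).powersetCard t,
          (if T ⊆ x then kraw n m x.card else 0) := by
    intro x _
    rw [Finset.sum_ite, Finset.sum_const, Finset.sum_const_zero, add_zero, nsmul_eq_mul]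
    congr 1
    have hpc : ((univ : Finset (Fin n)).powersetCard t).filter (fun T => T ⊆ x)
        = x.powersetCard t := by
      ext T
      simp only [Finset.mem_filter, Finset.mem_powersetCard]
      constructor
      · rintro ⟨⟨_, hc⟩, hs⟩; exact ⟨hs, hc⟩
      · rintro ⟨hs, hc⟩; exact ⟨⟨Finset.subset_univ _, hc⟩, hs⟩
    rw [hpc, Finset.card_powersetCard]
  rw [Finset.sum_congr rfl stepA, Finset.sum_comm]
  apply Finset.sum_eq_zero
  intro T hT
  rw [Finset.mem_powersetCard] at hT
  rw [← Finset.sum_filter]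
  have hrw2 : ∀ x ∈ ((univ : Finset (Fin n)).powerset).filter (fun x => T ⊆ x),
      kraw n m x.card = ∑ A ∈ (univ : Finset (Fin n)).powersetCard m, (-1:ℝ)^((A ∩ x).card) := by
    intro x _
    rw [sphereSum m x]
  rw [Finset.sum_congr rfl hrw2, Finset.sum_comm]
  apply Finset.sum_eq_zero
  intro A hA
  rw [Finset.mem_powersetCard] at hA
  have key : ∑ x ∈ ((univ : Finset (Fin n)).powerset).filter (fun x => T ⊆ x),
      (-1:ℝ)^((A ∩ x).card)
      = ∑ y ∈ Tᶜ.powerset, (-1:ℝ)^((A ∩ T).card) * (-1:ℝ)^((A ∩ y).card) := by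
    apply Finset.sum_nbij' (fun x => x \ T) (fun y => T ∪ y)
    · intro x hx
      rw [Finset.mem_filter] at hx
      rw [Finset.mem_powerset]
      intro i hi
      rw [Finset.mem_compl]
      exact (Finset.mem_sdiff.1 hi).2
    · intro y hy
      rw [Finset.mem_powerset] at hy
      rw [Finset.mem_filter, Finset.mem_powerset]
      exact ⟨Finset.subset_univ _, Finset.subset_union_left⟩
    · intro x hx
      rw [Finset.mem_filter] at hx
      exact Finset.union_sdiff_of_subset hx.2
    · intro y hy
      rw [Finset.mem_powerset] at hy
      apply Finset.union_sdiff_cancel_left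
      apply Finset.disjoint_left.2
      intro i hiT hiy
      exact (Finset.mem_compl.1 (hy hiy)) hiT
    · intro x hx
      rw [Finset.mem_filter] at hx
      rw [← pow_add]
      congr 1
      have hsplit : A ∩ x = (A ∩ T) ∪ (A ∩ (x \ T)) := by
        rw [← Finset.inter_union_distrib_left, Finset.union_sdiff_of_subset hx.2]
      rw [hsplit, Finset.card_union_of_disjoint]
      apply Finset.disjoint_left.2
      intro i hi1 hi2
      exact (Finset.mem_sdiff.1 (Finset.mem_inter.1 hi2).2).2 (Finset.mem_inter.1 hi1).2
  rw [key, ← Finset.mul_sum, charSum]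
  have hne : ¬ (A ∩ Tᶜ = ∅) := by
    intro h
    have hsub : A ⊆ T := by
      intro i hi
      by_contra hiT
      exact (Finset.notMem_empty i) (h ▸ Finset.mem_inter.2 ⟨hi, Finset.mem_compl.2 hiT⟩)
    have := Finset.card_le_card hsub
    omega
  rw [if_neg hne, mul_zero]

lemma descPoch_eval (k : ℕ) (x : ℝ) :
    (descPochhammer ℝ k).eval x = ∏ i ∈ Finset.range k, (x - i) := by
  induction k with
  | zero => simp [descPochhammer_zero]
  | succ k ih => rw [descPochhammer_succ_eval, ih, Finset.prod_range_succ]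

lemma rchoose_eq (x : ℝ) (k : ℕ) :
    rchoose x k = (descPochhammer ℝ k).eval x / (k.factorial : ℝ) := by
  rw [rchoose, descPoch_eval]

lemma rchoose_natCast (j k : ℕ) : rchoose (j : ℝ) k = (j.choose k : ℝ) := by
  rw [rchoose_eq, descPochhammer_eval_eq_descFactorial,
    Nat.descFactorial_eq_factorial_mul_choose]
  push_cast
  rw [mul_comm, mul_div_assoc, div_self (by positivity), mul_one]

/-- The Krawtchouk polynomial as an element of `ℝ[X]`. -/
noncomputable def Kpoly (n m : ℕ) : Polynomial ℝ :=
  ∑ k ∈ Finset.range (m + 1),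
    Polynomial.C ((-1 : ℝ) ^ k / (k.factorial : ℝ) / (((m - k).factorial : ℝ))) *
      (descPochhammer ℝ k * (descPochhammer ℝ (m - k)).comp (Polynomial.C (n : ℝ) - Polynomial.X))

lemma Kpoly_eval (n m : ℕ) (x : ℝ) : (Kpoly n m).eval x = krawR n m x := by
  rw [Kpoly, krawR, Polynomial.eval_finset_sum]
  apply Finset.sum_congr rfl
  intro k _
  rw [Polynomial.eval_mul, Polynomial.eval_C, Polynomial.eval_mul, Polynomial.eval_comp]
  simp only [Polynomial.eval_sub, Polynomial.eval_C, Polynomial.eval_X]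
  rw [rchoose_eq, rchoose_eq]
  field_simp

lemma CsubX_natDegree (n : ℕ) : (Polynomial.C (n : ℝ) - Polynomial.X).natDegree = 1 := by
  rw [show Polynomial.C (n:ℝ) - Polynomial.X = -(Polynomial.X - Polynomial.C (n:ℝ)) by ring,
    Polynomial.natDegree_neg, Polynomial.natDegree_X_sub_C]

lemma CsubX_leadingCoeff (n : ℕ) :
    (Polynomial.C (n : ℝ) - Polynomial.X).leadingCoeff = -1 := by
  rw [show Polynomial.C (n:ℝ) - Polynomial.X = -(Polynomial.X - Polynomial.C (n:ℝ)) by ring,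
    Polynomial.leadingCoeff_neg, Polynomial.leadingCoeff_X_sub_C]

lemma Kpoly_term_facts (n m k : ℕ) :
    (descPochhammer ℝ k * (descPochhammer ℝ (m - k)).comp
      (Polynomial.C (n : ℝ) - Polynomial.X)).natDegree = k + (m - k) ∧
    (descPochhammer ℝ k * (descPochhammer ℝ (m - k)).comp
      (Polynomial.C (n : ℝ) - Polynomial.X)).leadingCoeff = (-1 : ℝ) ^ (m - k) := by
  have hcompdeg : ((descPochhammer ℝ (m - k)).comp
      (Polynomial.C (n : ℝ) - Polynomial.X)).natDegree = m - k := by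
    rw [Polynomial.natDegree_comp, CsubX_natDegree, descPochhammer_natDegree, mul_one]
  have hcomplc : ((descPochhammer ℝ (m - k)).comp
      (Polynomial.C (n : ℝ) - Polynomial.X)).leadingCoeff = (-1 : ℝ) ^ (m - k) := by
    rw [Polynomial.leadingCoeff_comp (by rw [CsubX_natDegree]; norm_num),
      (monic_descPochhammer ℝ (m - k)).leadingCoeff, CsubX_leadingCoeff,
      descPochhammer_natDegree, one_mul]
  have h1 : (descPochhammer ℝ k) ≠ 0 := (monic_descPochhammer ℝ k).ne_zero
  have h2 : ((descPochhammer ℝ (m - k)).comp (Polynomial.C (n : ℝ) - Polynomial.X)) ≠ 0 := by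
    intro h
    rw [h, Polynomial.leadingCoeff_zero] at hcomplc
    have h3 : ((-1 : ℝ) ^ (m - k)) ≠ 0 := by positivity
    exact h3 hcomplc.symm
  constructor
  · rw [Polynomial.natDegree_mul h1 h2, descPochhammer_natDegree, hcompdeg]
  · rw [Polynomial.leadingCoeff_mul, (monic_descPochhammer ℝ k).leadingCoeff, one_mul, hcomplc]

lemma Kpoly_coeff_m (n m : ℕ) :
    (Kpoly n m).coeff m
      = (-1 : ℝ) ^ m * ∑ k ∈ Finset.range (m + 1),
          (1 / (k.factorial : ℝ) / (((m - k).factorial : ℝ))) := by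
  rw [Kpoly, Polynomial.finset_sum_coeff, Finset.mul_sum]
  apply Finset.sum_congr rfl
  intro k hk
  rw [Finset.mem_range, Nat.lt_succ_iff] at hk
  obtain ⟨hdeg, hlc⟩ := Kpoly_term_facts n m k
  have hkm : k + (m - k) = m := by omega
  rw [Polynomial.coeff_C_mul]
  rw [show ((descPochhammer ℝ k * (descPochhammer ℝ (m - k)).comp
      (Polynomial.C (n : ℝ) - Polynomial.X))).coeff m = (-1 : ℝ) ^ (m - k) by
    rw [← hlc, ← Polynomial.coeff_natDegree, hdeg, hkm]]
  rw [show ((-1:ℝ)^k / (k.factorial : ℝ) / (((m - k).factorial : ℝ))) * (-1)^(m-k)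
      = ((-1:ℝ)^k * (-1)^(m-k)) * (1 / (k.factorial : ℝ) / (((m - k).factorial : ℝ))) by ring,
    ← pow_add, hkm]

lemma Kpoly_coeff_m_ne (n m : ℕ) : (Kpoly n m).coeff m ≠ 0 := by
  rw [Kpoly_coeff_m]
  apply mul_ne_zero
  · positivity
  · have hpos : 0 < ∑ k ∈ Finset.range (m + 1),
        (1 / (k.factorial : ℝ) / (((m - k).factorial : ℝ))) := by
      apply Finset.sum_pos
      · intro k _
        positivity
      · exact ⟨0, Finset.mem_range.2 (Nat.succ_pos m)⟩
    exact ne_of_gt hpos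

lemma Kpoly_natDegree (n m : ℕ) : (Kpoly n m).natDegree = m := by
  have hle : (Kpoly n m).natDegree ≤ m := by
    rw [Kpoly]
    apply le_trans (Polynomial.natDegree_sum_le _ _)
    rw [Finset.fold_max_le]
    constructor
    · omega
    · intro k hk
      rw [Finset.mem_range, Nat.lt_succ_iff] at hk
      simp only [Function.comp_apply]
      apply le_trans (Polynomial.natDegree_mul_le)
      rw [Polynomial.natDegree_C, zero_add, (Kpoly_term_facts n m k).1]
      omega
  have hge : m ≤ (Kpoly n m).natDegree :=
    Polynomial.le_natDegree_of_ne_zero (Kpoly_coeff_m_ne n m)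
  omega

lemma Kpoly_ne_zero (n m : ℕ) : Kpoly n m ≠ 0 := fun h => Kpoly_coeff_m_ne n m (by simp [h])

lemma krawR_natCast (n m j : ℕ) (hj : j ≤ n) : krawR n m (j : ℝ) = kraw n m j := by
  rw [krawR, kraw]
  apply Finset.sum_congr rfl
  intro k _
  rw [rchoose_natCast, show ((n : ℝ) - (j : ℝ)) = (((n - j : ℕ)) : ℝ) by
    rw [Nat.cast_sub hj], rchoose_natCast]

lemma kraw_zero (n m : ℕ) : kraw n m 0 = (n.choose m : ℝ) := by
  rw [kraw]
  rw [Finset.sum_eq_single 0]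
  · simp
  · intro k _ hk
    rw [Nat.choose_eq_zero_of_lt (by omega : 0 < k)]
    simp
  · intro h
    simp at h

lemma krawR_zero (n m : ℕ) : krawR n m 0 = (n.choose m : ℝ) := by
  have := krawR_natCast n m 0 (Nat.zero_le n)
  rw [Nat.cast_zero] at this
  rw [this, kraw_zero]

/-- every real polynomial of natDegree ≤ r is a combination of descPochhammers. -/
lemma descPoch_span : ∀ (r : ℕ) (Q : Polynomial ℝ), Q.natDegree ≤ r →
    ∃ c : ℕ → ℝ, Q = ∑ t ∈ Finset.range (r + 1), Polynomial.C (c t) * descPochhammer ℝ t := by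
  intro r
  induction r with
  | zero =>
    intro Q hQ
    refine ⟨fun _ => Q.coeff 0, ?_⟩
    rw [Finset.sum_range_one, descPochhammer_zero, mul_one]
    exact Polynomial.eq_C_of_natDegree_le_zero hQ
  | succ r ih =>
    intro Q hQ
    set a := Q.coeff (r + 1) with ha
    set Q' := Q - Polynomial.C a * descPochhammer ℝ (r + 1) with hQ'
    have hmon := monic_descPochhammer ℝ (r + 1)
    have hdp : (descPochhammer ℝ (r + 1)).natDegree = r + 1 := by rw [descPochhammer_natDegree]
    have hQ'deg : Q'.natDegree ≤ r := by
      rw [Polynomial.natDegree_le_iff_coeff_eq_zero]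
      intro N hN
      rw [hQ', Polynomial.coeff_sub, Polynomial.coeff_C_mul]
      rcases Nat.lt_or_ge (r + 1) N with h | h
      · rw [Polynomial.coeff_eq_zero_of_natDegree_lt (lt_of_le_of_lt hQ h),
          Polynomial.coeff_eq_zero_of_natDegree_lt (by rw [hdp]; exact h)]
        ring
      · have hNr : N = r + 1 := by omega
        rw [hNr, ← ha, show (descPochhammer ℝ (r + 1)).coeff (r + 1) = 1 by
          simpa [hdp] using hmon.coeff_natDegree]
        ring
    obtain ⟨c, hc⟩ := ih Q' hQ'deg
    classical
    refine ⟨Function.update c (r + 1) a, ?_⟩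
    rw [Finset.sum_range_succ, Function.update_self]
    have : ∑ t ∈ Finset.range (r + 1),
        Polynomial.C (Function.update c (r + 1) a t) * descPochhammer ℝ t
        = ∑ t ∈ Finset.range (r + 1), Polynomial.C (c t) * descPochhammer ℝ t := by
      apply Finset.sum_congr rfl
      intro t ht
      rw [Finset.mem_range] at ht
      rw [Function.update_of_ne (by omega)]
    rw [this, ← hc, hQ']
    ring

/-- Orthogonality of `kraw n m` against any polynomial of degree < m. -/
lemma orthPoly {n : ℕ} (m : ℕ) (Q : Polynomial ℝ) (hQ : Q.natDegree < m) :
    ∑ x ∈ (univ : Finset (Fin n)).powerset, Q.eval (x.card : ℝ) * kraw n m x.card = 0 := by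
  classical
  obtain ⟨m', rfl⟩ : ∃ m', m = m' + 1 := ⟨m - 1, by omega⟩
  obtain ⟨c, hc⟩ := descPoch_span m' Q (by omega)
  have heval : ∀ j : ℕ, Q.eval (j : ℝ)
      = ∑ t ∈ Finset.range (m' + 1), c t * ((t.factorial : ℝ) * (j.choose t : ℝ)) := by
    intro j
    rw [hc, Polynomial.eval_finset_sum]
    apply Finset.sum_congr rfl
    intro t _
    rw [Polynomial.eval_mul, Polynomial.eval_C, descPochhammer_eval_eq_descFactorial,
      Nat.descFactorial_eq_factorial_mul_choose]
    push_cast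
    ring
  have step : ∀ x ∈ (univ : Finset (Fin n)).powerset,
      Q.eval (x.card : ℝ) * kraw n m'.succ x.card
      = ∑ t ∈ Finset.range (m' + 1),
          (c t * (t.factorial : ℝ)) * ((x.card.choose t : ℝ) * kraw n m'.succ x.card) := by
    intro x _
    rw [heval, Finset.sum_mul]
    apply Finset.sum_congr rfl
    intro t _
    ring
  rw [Finset.sum_congr rfl step, Finset.sum_comm]
  apply Finset.sum_eq_zero
  intro t ht
  rw [Finset.mem_range] at ht
  rw [← Finset.mul_sum, orthBinom m'.succ t (by omega), mul_zero]

lemma Kpoly_roots_card (n m : ℕ) (hm : m ≤ n) :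
    Multiset.card (Kpoly n m).roots = m := by
  classical
  set P := Kpoly n m with hPdef
  have hPne : P ≠ 0 := Kpoly_ne_zero n m
  have hP0 : P.eval 0 = (n.choose m : ℝ) := by rw [hPdef, Kpoly_eval, krawR_zero]
  have hP0pos : 0 < P.eval 0 := by
    rw [hP0]; exact_mod_cast Nat.choose_pos hm
  set E := P.roots.toFinset.filter (fun z => Odd (P.roots.count z)) with hE
  have hEm : m ≤ E.card := by
    by_contra hlt
    push_neg at hlt
    set Q := ∏ z ∈ E, (Polynomial.X - Polynomial.C z) with hQ
    have hQdeg : Q.natDegree < m := by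
      have : Q.natDegree = ∑ z ∈ E, (Polynomial.X - Polynomial.C z).natDegree := by
        rw [hQ, Polynomial.natDegree_prod]
        intro z _
        exact Polynomial.X_sub_C_ne_zero z
      rw [this]
      calc ∑ z ∈ E, (Polynomial.X - Polynomial.C z).natDegree
          = ∑ z ∈ E, 1 := by
            apply Finset.sum_congr rfl; intro z _; exact Polynomial.natDegree_X_sub_C z
        _ = E.card := by rw [Finset.sum_const, smul_eq_mul, mul_one]
        _ < m := hlt
    have horth := orthPoly (n := n) m Q hQdeg
    have hkp : ∀ x : Finset (Fin n), kraw n m x.card = P.eval (x.card : ℝ) := by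
      intro x
      rw [hPdef, Kpoly_eval, krawR_natCast n m x.card (by
        simpa using Finset.card_le_univ x)]
    obtain ⟨U, hPU, hUdeg, hU0⟩ := Polynomial.exists_prod_multiset_X_sub_C_mul P
    have hUne : U ≠ 0 := by
      intro h
      rw [h, mul_zero] at hPU
      exact hPne hPU.symm
    have hUnoroot : ∀ y : ℝ, U.eval y ≠ 0 := by
      intro y hy
      have : y ∈ U.roots := (Polynomial.mem_roots hUne).2 hy
      rw [hU0] at this
      exact absurd this (Multiset.notMem_zero y)
    set s := U.eval 0 with hs
    have hsign : ∀ y : ℝ, 0 < s * U.eval y := by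
      intro y
      by_contra hle
      push_neg at hle
      have hne : s * U.eval y ≠ 0 := mul_ne_zero (hUnoroot 0) (hUnoroot y)
      have hlt' : s * U.eval y < 0 := lt_of_le_of_ne hle hne
      have h0mem : (0 : ℝ) ∈ Set.uIcc (U.eval 0) (U.eval y) := by
        rcases mul_neg_iff.1 hlt' with ⟨h1, h2⟩ | ⟨h1, h2⟩
        · exact Set.mem_uIcc.2 (Or.inr ⟨le_of_lt h2, le_of_lt h1⟩)
        · exact Set.mem_uIcc.2 (Or.inl ⟨le_of_lt h1, le_of_lt h2⟩)
      obtain ⟨cpt, _, hcpt⟩ := intermediate_value_uIcc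
        ((Polynomial.continuous U).continuousOn (s := Set.uIcc 0 y)) h0mem
      exact hUnoroot cpt hcpt
    have hET : E ⊆ P.roots.toFinset := Finset.filter_subset _ _
    have hQV : ∀ y : ℝ, 0 ≤ Q.eval y *
        ((Multiset.map (fun a => Polynomial.X - Polynomial.C a) P.roots).prod).eval y := by
      intro y
      rw [Polynomial.prod_multiset_root_eq_finset_root, hQ, Polynomial.eval_prod,
        Polynomial.eval_prod]
      simp only [Polynomial.eval_pow, Polynomial.eval_sub, Polynomial.eval_X, Polynomial.eval_C]
      have key1 : ∏ z ∈ E, (y - z)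
          = ∏ z ∈ P.roots.toFinset, (y - z) ^ (if z ∈ E then 1 else 0) := by
        rw [← Finset.prod_subset hET (fun z _ hnz => by rw [if_neg hnz, pow_zero])]
        apply Finset.prod_congr rfl
        intro z hz
        rw [if_pos hz, pow_one]
      rw [key1, ← Finset.prod_mul_distrib]
      apply Finset.prod_nonneg
      intro z hz
      rw [← pow_add]
      apply Even.pow_nonneg
      rw [← Polynomial.count_roots]
      by_cases hzE : z ∈ E
      · rw [if_pos hzE, add_comm]
        exact Odd.add_one ((Finset.mem_filter.1 hzE).2)
      · rw [if_neg hzE, zero_add]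
        exact Nat.not_odd_iff_even.1 (fun hodd => hzE (Finset.mem_filter.2 ⟨hz, hodd⟩))
    have hQ0 : Q.eval 0 ≠ 0 := by
      rw [hQ, Polynomial.eval_prod]
      apply Finset.prod_ne_zero_iff.2
      intro z hz
      simp only [Polynomial.eval_sub, Polynomial.eval_X, Polynomial.eval_C]
      have hzr : z ∈ P.roots := Multiset.mem_toFinset.1 (hET hz)
      have : P.eval z = 0 := (Polynomial.mem_roots hPne).1 hzr
      intro h0
      rw [show z = 0 by linarith [h0]] at this
      rw [this] at hP0pos
      exact lt_irrefl 0 hP0pos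
    have hterm : ∀ x ∈ (univ : Finset (Fin n)).powerset,
        0 ≤ s * (Q.eval (x.card : ℝ) * P.eval (x.card : ℝ)) := by
      intro x _
      have hPev : P.eval (x.card : ℝ)
          = ((Multiset.map (fun a => Polynomial.X - Polynomial.C a) P.roots).prod).eval
              (x.card : ℝ) * U.eval (x.card : ℝ) := by
        conv_lhs => rw [← hPU]
        rw [Polynomial.eval_mul]
      rw [hPev, show ∀ a b c : ℝ, s * (a * (b * c)) = a * b * (s * c) from
        fun a b c => by ring]
      exact mul_nonneg (hQV _) (le_of_lt (hsign _))
    have hsum0 : ∑ x ∈ (univ : Finset (Fin n)).powerset,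
        s * (Q.eval (x.card : ℝ) * P.eval (x.card : ℝ)) = 0 := by
      rw [← Finset.mul_sum]
      have : ∑ x ∈ (univ : Finset (Fin n)).powerset,
          Q.eval (x.card : ℝ) * P.eval (x.card : ℝ)
          = ∑ x ∈ (univ : Finset (Fin n)).powerset, Q.eval (x.card : ℝ) * kraw n m x.card := by
        apply Finset.sum_congr rfl
        intro x _
        rw [hkp]
      rw [this, horth, mul_zero]
    have hpos : 0 < ∑ x ∈ (univ : Finset (Fin n)).powerset,
        s * (Q.eval (x.card : ℝ) * P.eval (x.card : ℝ)) := by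
      apply Finset.sum_pos' hterm
      refine ⟨∅, Finset.empty_mem_powerset _, ?_⟩
      have h0 : ((∅ : Finset (Fin n)).card : ℝ) = 0 := by simp
      rw [h0]
      have hne : s * (Q.eval 0 * P.eval 0) ≠ 0 :=
        mul_ne_zero (hUnoroot 0) (mul_ne_zero hQ0 (ne_of_gt hP0pos))
      exact lt_of_le_of_ne (by simpa [h0] using hterm ∅ (Finset.empty_mem_powerset _)) (Ne.symm hne)
    rw [hsum0] at hpos
    exact lt_irrefl 0 hpos
  have h1 : E.card ≤ P.roots.toFinset.card := Finset.card_filter_le _ _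
  have h2 : P.roots.toFinset.card ≤ Multiset.card P.roots := Multiset.toFinset_card_le _
  have h3 : Multiset.card P.roots ≤ m := by
    rw [← Kpoly_natDegree n m]
    exact Polynomial.card_roots' P
  omega

lemma pow_card_le_msprod (S : Multiset ℝ) (c : ℝ) (hc : 0 ≤ c) (h : ∀ z ∈ S, c ≤ z) :
    c ^ (Multiset.card S) ≤ S.prod := by
  induction S using Multiset.induction_on with
  | empty => simp
  | cons a S ih =>
    rw [Multiset.prod_cons, Multiset.card_cons, pow_succ, mul_comm (c ^ Multiset.card S) c]
    have hca : c ≤ a := h a (Multiset.mem_cons_self a S)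
    have hS : ∀ z ∈ S, c ≤ z := fun z hz => h z (Multiset.mem_cons_of_mem hz)
    exact mul_le_mul hca (ih hS) (pow_nonneg hc _) (le_trans hc hca)

theorem kraw_value_at_d_below_first_root (n m d : ℕ) (β δ x₁ : ℝ)
    (hn : 0 < n) (hm : m ≤ n)
    (hδ : δ = (d : ℝ) / n) (h0 : 0 < δ) (hβδ : δ < β) (hβ : β < 1 / 2)
    (hd : (d : ℝ) < β * n)
    (hroot : krawR n m x₁ = 0)
    (hmin : ∀ y : ℝ, krawR n m y = 0 → x₁ ≤ y)
    (hx₁ : β * n < x₁ - 1) :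
    0 < krawR n m d ∧
    ((x₁ - d) / x₁) ^ m ≤ krawR n m d / krawR n m 0 ∧
    (2 * β - 2 * δ) ^ m ≤ ((x₁ - d) / x₁) ^ m := by
  have hn1 : (1 : ℝ) ≤ (n : ℝ) := by exact_mod_cast hn
  have hβpos : 0 < β := lt_trans h0 hβδ
  have hβn : 0 < β * (n : ℝ) := mul_pos hβpos (by linarith)
  have hx₁1 : 1 < x₁ := by linarith
  have hx₁pos : 0 < x₁ := by linarith
  have hdnn : (0 : ℝ) ≤ (d : ℝ) := Nat.cast_nonneg d
  have hdx₁ : (d : ℝ) < x₁ := by linarith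
  have hc₀pos : 0 < (x₁ - d) / x₁ := div_pos (by linarith) hx₁pos
  have hδn : δ * (n : ℝ) = (d : ℝ) := by
    rw [hδ]; field_simp
  -- the polynomial and its roots
  have hroots := Kpoly_roots_card n m hm
  have hfact := Polynomial.C_leadingCoeff_mul_prod_multiset_X_sub_C
    (p := Kpoly n m) (by rw [hroots, Kpoly_natDegree])
  have hzx₁ : ∀ z ∈ (Kpoly n m).roots, x₁ ≤ z := by
    intro z hz
    apply hmin
    rw [← Kpoly_eval]
    exact (Polynomial.mem_roots (Kpoly_ne_zero n m)).1 hz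
  have heval : ∀ y : ℝ, krawR n m y
      = (Kpoly n m).leadingCoeff * ((Kpoly n m).roots.map (fun z => y - z)).prod := by
    intro y
    rw [← Kpoly_eval]
    conv_lhs => rw [← hfact]
    rw [Polynomial.eval_mul, Polynomial.eval_C, Polynomial.eval_multiset_prod,
      Multiset.map_map]
    congr 2
    apply Multiset.map_congr rfl
    intro z _
    simp
  set R : ℝ := ((Kpoly n m).roots.map (fun z : ℝ => (z - (d:ℝ)) / z)).prod with hR
  have hsplit : krawR n m (d : ℝ) = krawR n m 0 * R := by
    rw [heval, heval, hR]
    have hmapeq : (Kpoly n m).roots.map (fun z => (d : ℝ) - z)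
        = (Kpoly n m).roots.map (fun z => ((0 : ℝ) - z) * ((z - d) / z)) := by
      apply Multiset.map_congr rfl
      intro z hz
      have hzpos : 0 < z := lt_of_lt_of_le hx₁pos (hzx₁ z hz)
      field_simp
      ring
    rw [hmapeq, Multiset.prod_map_mul]
    ring
  have hRge : ((x₁ - d) / x₁) ^ m ≤ R := by
    have hcard : Multiset.card ((Kpoly n m).roots.map (fun z : ℝ => (z - (d:ℝ)) / z)) = m := by
      rw [Multiset.card_map, hroots]
    rw [← hcard, hR]
    apply pow_card_le_msprod _ _ (le_of_lt hc₀pos)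
    intro w hw
    rw [Multiset.mem_map] at hw
    obtain ⟨z, hz, rfl⟩ := hw
    have hzx := hzx₁ z hz
    have hzpos : 0 < z := lt_of_lt_of_le hx₁pos hzx
    rw [div_le_div_iff₀ hx₁pos hzpos]
    nlinarith
  have hRpos : 0 < R := lt_of_lt_of_le (pow_pos hc₀pos m) hRge
  have hk0 : krawR n m 0 = (n.choose m : ℝ) := krawR_zero n m
  have hk0pos : 0 < krawR n m 0 := by
    rw [hk0]; exact_mod_cast Nat.choose_pos hm
  refine ⟨?_, ?_, ?_⟩
  · rw [hsplit]
    exact mul_pos hk0pos hRpos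
  · rw [hsplit, mul_comm, mul_div_assoc, div_self (ne_of_gt hk0pos), mul_one]
    exact hRge
  · apply pow_le_pow_left₀ (by linarith)
    rw [le_div_iff₀ hx₁pos]
    nlinarith [mul_nonneg (mul_nonneg (by linarith : (0:ℝ) ≤ β - δ)
        (by linarith : (0:ℝ) ≤ 1 - 2*β)) (by linarith : (0:ℝ) ≤ (n:ℝ)),
      mul_nonneg (by linarith : (0:ℝ) ≤ x₁ - (β*n+1))
        (by linarith : (0:ℝ) ≤ 1 - 2*β + 2*δ)]

end Cube
end
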